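/- arXiv:0803.0031 — 2 statements merged into one kernel-verified Lean document; each statement's English description precedes it below -/
import Mathlib

section
/- Let V be a finite-dimensional vector space with a bilinear form χ, and let v_0,…,v_n be a semiorthonormal basis (χ(v_i,v_j)=0 for i>j, χ(v_k,v_k)=1). Let A be the matrix of χ in this basis, let χ_s be the symmetrization χ_s(w1,w2)=χ(w1,w2)+χ(w2,w1), and let I_j : v ↦ v − χ_s(v,v_j)v_j be the reflection with respect to v_j. Then the matrix of the composite I_0 I_1 ⋯ I_n in this basis equals −A⁻¹Aᵗ. -/
open Matrix
theorem coxeter_symmetrized {V : Type*} [AddCommGroup V] [Module ℚ V] {n : ℕ}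
    (b : Module.Basis (Fin (n + 1)) ℚ V) (χ : LinearMap.BilinForm ℚ V)
    (hso : ∀ i j : Fin (n + 1), i > j → χ (b i) (b j) = 0)
    (hone : ∀ k : Fin (n + 1), χ (b k) (b k) = 1)
    (A : Matrix (Fin (n + 1)) (Fin (n + 1)) ℚ)
    (hA : A = Matrix.of fun i j => χ (b i) (b j))
    (I : Fin (n + 1) → V →ₗ[ℚ] V)
    (hI : ∀ j v, I j v = v - (χ v (b j) + χ (b j) v) • b j) :
    LinearMap.toMatrix b b (List.ofFn I).prod = -(A⁻¹ * Aᵀ) := by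
  -- auxiliary: reflections with index > i preserve χ(·, b i)
  have aux : ∀ (l : List (Fin (n + 1))) (i : Fin (n + 1)), (∀ j ∈ l, i < j) →
      ∀ w, χ ((l.map I).prod w) (b i) = χ w (b i) := by
    intro l
    induction l with
    | nil => intro i _ w; simp
    | cons a t ih =>
      intro i h w
      simp only [List.map_cons, List.prod_cons, Module.End.mul_apply]
      rw [hI]
      have ha : χ (b a) (b i) = 0 := hso a i (h a (by simp))
      simp only [map_sub, LinearMap.sub_apply, _root_.map_smul, LinearMap.smul_apply,
        smul_eq_mul, ha, mul_zero, sub_zero]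
      exact ih i (fun j hj => h j (by simp [hj])) w
  -- key: χ(b i, C w) = -χ(w, b i)
  have key : ∀ (l : List (Fin (n + 1))), l.Pairwise (· < ·) →
      ∀ i ∈ l, ∀ w, χ (b i) ((l.map I).prod w) = -χ w (b i) := by
    intro l
    induction l with
    | nil => simp
    | cons a t ih =>
      intro hp i hi w
      rw [List.pairwise_cons] at hp
      simp only [List.map_cons, List.prod_cons, Module.End.mul_apply]
      rw [hI]
      rcases List.mem_cons.mp hi with rfl | hit
      · have hu := aux t i hp.1 w
        simp only [map_sub, _root_.map_smul, smul_eq_mul, hone i, mul_one]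
        rw [hu]
        ring
      · have hia : χ (b i) (b a) = 0 := hso i a (hp.1 i hit)
        simp only [map_sub, _root_.map_smul, smul_eq_mul, hia, mul_zero, sub_zero]
        exact ih hp.2 i hit w
  have hkey : ∀ i w, χ (b i) ((List.ofFn I).prod w) = -χ w (b i) := by
    intro i w
    have := key (List.finRange (n + 1)) (List.pairwise_lt_finRange _) i
      (List.mem_finRange i) w
    rwa [← List.ofFn_eq_map] at this
  set M := LinearMap.toMatrix b b (List.ofFn I).prod with hM
  have hAM : A * M = -Aᵀ := by
    ext i j
    have hrepr : ∀ u : V, ∑ k, χ (b i) (b k) * b.repr u k = χ (b i) u := by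
      intro u
      conv_rhs => rw [← b.sum_repr u]
      rw [map_sum]
      exact Finset.sum_congr rfl fun k _ => by
        rw [_root_.map_smul, smul_eq_mul, mul_comm]
    simp only [Matrix.mul_apply, Matrix.neg_apply, Matrix.transpose_apply, hA,
      Matrix.of_apply, hM, LinearMap.toMatrix_apply]
    rw [hrepr ((List.ofFn I).prod (b j)), hkey i (b j)]
  have htri : A.BlockTriangular id := by
    intro i j hij
    rw [hA]
    exact hso i j hij
  have hdet : A.det = 1 := by
    rw [Matrix.det_of_upperTriangular htri]
    simp [hA, hone]
  have hunit : IsUnit A.det := by rw [hdet]; exact isUnit_one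
  calc M = A⁻¹ * (A * M) := by
        rw [← Matrix.mul_assoc, Matrix.nonsing_inv_mul A hunit, Matrix.one_mul]
    _ = -(A⁻¹ * Aᵀ) := by rw [hAM, Matrix.mul_neg]
end

section
/- Let V be a finite-dimensional vector space with a bilinear form χ, and let v_0,…,v_n be a semiorthonormal basis with Gram matrix A. Let χ_a be the alternation χ_a(w1,w2)=χ(w1,w2)−χ(w2,w1), and let I_j : v ↦ v + χ_a(v,v_j)v_j be the symplectic transvection with respect to v_j. Then the matrix of I_0 I_1 ⋯ I_n in this basis equals A⁻¹Aᵗ. -/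
open Matrix

theorem coxeter_alternated {V : Type*} [AddCommGroup V] [Module ℚ V] {n : ℕ}
    (b : Module.Basis (Fin (n + 1)) ℚ V) (χ : LinearMap.BilinForm ℚ V)
    (hso : ∀ i j : Fin (n + 1), i > j → χ (b i) (b j) = 0)
    (hone : ∀ k : Fin (n + 1), χ (b k) (b k) = 1)
    (A : Matrix (Fin (n + 1)) (Fin (n + 1)) ℚ)
    (hA : A = Matrix.of fun i j => χ (b i) (b j))
    (I : Fin (n + 1) → V →ₗ[ℚ] V)
    (hI : ∀ j v, I j v = v + (χ v (b j) - χ (b j) v) • b j) :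
    LinearMap.toMatrix b b (List.ofFn I).prod = A⁻¹ * Aᵀ := by
  classical
  -- entries of the matrix of I j
  have hM : ∀ (j k i : Fin (n + 1)),
      LinearMap.toMatrix b b (I j) k i =
      (if i = k then 1 else 0) + (A i j - A j i) * (if j = k then 1 else 0) := by
    intro j k i
    rw [LinearMap.toMatrix_apply, hI]
    simp only [map_add, _root_.map_smul, Module.Basis.repr_self, Finsupp.add_apply,
      Finsupp.smul_apply, smul_eq_mul, Finsupp.single_apply, hA, of_apply]
  set L : List (Matrix (Fin (n + 1)) (Fin (n + 1)) ℚ) :=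
    List.ofFn (fun j => LinearMap.toMatrix b b (I j)) with hL
  have hprod : LinearMap.toMatrix b b (List.ofFn I).prod = L.prod := by
    show (LinearMap.toMatrixAlgEquiv b) (List.ofFn I).prod = L.prod
    rw [map_list_prod, hL, List.map_ofFn]
    rfl
  -- partial matrices
  set B : ℕ → Matrix (Fin (n + 1)) (Fin (n + 1)) ℚ :=
    fun m => Matrix.of fun i k => if (i : ℕ) < m then A k i else A i k with hB
  -- the key one-step computation
  have hkey : ∀ m : Fin (n + 1), B m * LinearMap.toMatrix b b (I m) = B (m + 1) := by
    intro m
    ext i k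
    rw [Matrix.mul_apply]
    simp only [hM]
    have hcol : ∀ p : Fin (n + 1), B m i p * ((if k = p then (1:ℚ) else 0)
        + (A k m - A m k) * (if m = p then 1 else 0))
        = (if k = p then B m i p else 0) + (if m = p then B m i p * (A k m - A m k) else 0) := by
      intro p
      split <;> split <;> simp_all
    rw [Finset.sum_congr rfl fun p _ => hcol p, Finset.sum_add_distrib,
      Finset.sum_ite_eq, Finset.sum_ite_eq]
    simp only [Finset.mem_univ, if_true, hB, of_apply]
    have hBim : (if (i:ℕ) < (m:ℕ) then A m i else A i m) = if i = m then 1 else 0 := by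
      rcases lt_trichotomy (i : ℕ) (m : ℕ) with h | h | h
      · rw [if_pos h, if_neg (show ¬ i = m by intro hh; subst hh; omega)]
        simp only [hA, of_apply]
        exact hso m i h
      · have : i = m := Fin.ext h
        subst this
        rw [if_neg (by omega), if_pos rfl]
        simp only [hA, of_apply]
        exact hone i
      · rw [if_neg (by omega), if_neg (show ¬ i = m by intro hh; subst hh; omega)]
        simp only [hA, of_apply]
        exact hso i m h
    rw [hBim]
    rcases lt_trichotomy (i : ℕ) (m : ℕ) with h | h | h
    · rw [if_pos h, if_neg (show ¬ i = m by intro hh; subst hh; omega), if_pos (by omega)]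
      ring
    · have : i = m := Fin.ext h
      subst this
      rw [if_neg (by omega), if_pos rfl, if_pos (by omega)]
      ring
    · rw [if_neg (by omega), if_neg (show ¬ i = m by intro hh; subst hh; omega),
        if_neg (by omega)]
      ring
  have hlen : L.length = n + 1 := by rw [hL]; exact List.length_ofFn
  -- descending induction packaged as ascending induction on k
  have main : ∀ k : ℕ, k ≤ n + 1 → B (n + 1 - k) * (L.drop (n + 1 - k)).prod = Aᵀ := by
    intro k
    induction k with
    | zero =>
      intro _
      simp only [Nat.sub_zero]
      rw [List.drop_eq_nil_of_le (by omega), List.prod_nil, mul_one]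
      ext i kk
      simp [hB, transpose_apply, i.isLt]
    | succ k ih =>
      intro hk
      have hm : n + 1 - (k + 1) = n - k := by omega
      have hm' : n + 1 - k = (n - k) + 1 := by omega
      set m : ℕ := n - k with hmdef
      have hmlt : m < L.length := by rw [hlen]; omega
      rw [hm, List.drop_eq_getElem_cons hmlt, List.prod_cons]
      have hget : L[m]'hmlt = LinearMap.toMatrix b b (I ⟨m, by omega⟩) := by
        simp only [hL, List.getElem_ofFn]
      rw [hget, ← mul_assoc]
      have hk2 := hkey ⟨m, by omega⟩
      simp only [Fin.val_mk] at hk2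
      rw [hk2]
      have := ih (by omega)
      rw [hm'] at this
      exact this
  have hA0 : A * L.prod = Aᵀ := by
    have := main (n + 1) le_rfl
    simp only [Nat.sub_self, List.drop_zero] at this
    have hB0 : B 0 = A := by ext i k; simp [hB]
    rwa [hB0] at this
  -- A has determinant 1
  have hdet : A.det = 1 := by
    have htri : A.BlockTriangular id := by
      intro i j hij
      simp only [hA, of_apply]
      exact hso i j hij
    rw [Matrix.det_of_upperTriangular htri]
    simp only [hA, of_apply]
    exact Finset.prod_eq_one fun i _ => hone i
  have hinv : A⁻¹ * A = 1 := Matrix.nonsing_inv_mul A (by simp [hdet])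
  rw [hprod, ← hA0, ← mul_assoc, hinv, one_mul]
end
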